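/- For every odd positive integer n, the instance complexity of the Odd-Max-Bit function is strictly less than 2: there exists a decision tree T computing OMB_n such that for every input x ∈ {0,1}^n, the number of queries T makes on x is strictly less than 2·C(OMB_n, x). -/

import Mathlib

/-- A deterministic decision tree over variables indexed by `ι`:
either a leaf labeled with an output bit, or an internal node that queries
variable `i` and branches on its value (`t0` if false, `t1` if true). -/
inductive DecTree (ι : Type) where
  | leaf (b : Bool)
  | node (i : ι) (t0 t1 : DecTree ι)

namespace DecTree

variable {ι : Type}

/-- The output of a decision tree on input `x`. -/
def eval : DecTree ι → (ι → Bool) → Bool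
  | leaf b, _ => b
  | node i t0 t1, x => if x i then t1.eval x else t0.eval x

/-- The number of queries (internal nodes visited) made by a decision tree on input `x`. -/
def queries : DecTree ι → (ι → Bool) → ℕ
  | leaf _, _ => 0
  | node i t0 t1, x => 1 + (if x i then t1.queries x else t0.queries x)

/-- The depth of a decision tree: the maximum number of queries over all inputs. -/
def depth : DecTree ι → ℕ
  | leaf _ => 0
  | node _ t0 t1 => 1 + max t0.depth t1.depth

end DecTree

/-- A decision tree `T` computes `f` if its output agrees with `f` on every input. -/
def Computes {ι : Type} (T : DecTree ι) (f : (ι → Bool) → Bool) : Prop :=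
  ∀ x, T.eval x = f x

/-- `S` is a certificate for input `x` w.r.t. `f`: every input agreeing with `x`
on all coordinates in `S` has the same function value as `x`. -/
def IsCert {ι : Type} (f : (ι → Bool) → Bool) (x : ι → Bool) (S : Finset ι) : Prop :=
  ∀ y : ι → Bool, (∀ i ∈ S, y i = x i) → f y = f x

/-- The certificate complexity `C(f,x)`: the minimum size of a certificate for `x`. -/
noncomputable def certC {ι : Type} (f : (ι → Bool) → Bool) (x : ι → Bool) : ℕ :=
  sInf {k | ∃ S : Finset ι, S.card = k ∧ IsCert f x S}

/-- The minimum certificate complexity `C_min(f) = min_x C(f,x)`. -/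
noncomputable def Cmin {ι : Type} (f : (ι → Bool) → Bool) : ℕ :=
  sInf {k | ∃ x : ι → Bool, certC f x = k}

/-- The deterministic query complexity `DT(f)`: the minimum depth of a decision
tree computing `f`. -/
noncomputable def DTC {ι : Type} (f : (ι → Bool) → Bool) : ℕ :=
  sInf {d | ∃ T : DecTree ι, Computes T f ∧ T.depth ≤ d}

/-- The Hamming weight of an input. -/
def wt {n : ℕ} (x : Fin n → Bool) : ℕ :=
  (Finset.univ.filter fun i => x i = true).card

/-- The Odd-Max-Bit function on `n` variables indexed `1,…,n` (coordinate
`i : Fin n` has index `i+1`): outputs `true` iff the maximum index of a variable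
set to `1` exists and is odd (in particular `OMBb n 0^n = false`). -/
def OMBb (n : ℕ) (x : Fin n → Bool) : Bool :=
  decide (∃ i : Fin n, x i = true ∧ Odd ((i : ℕ) + 1) ∧ ∀ j : Fin n, i < j → x j = false)


lemma OMBb_eq_false {n : ℕ} {x : Fin n → Bool} (h : ∀ i, x i = false) : OMBb n x = false := by
  simp only [OMBb, decide_eq_false_iff_not]
  rintro ⟨i, hi, -, -⟩
  rw [h i] at hi; exact Bool.false_ne_true hi

lemma OMBb_max {n : ℕ} {x : Fin n → Bool} {i : Fin n} (hi : x i = true)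
    (hm : ∀ j, i < j → x j = false) : OMBb n x = decide (Odd ((i : ℕ) + 1)) := by
  unfold OMBb
  apply decide_eq_decide.mpr
  constructor
  · rintro ⟨i', hi', hodd, hmax⟩
    rcases lt_trichotomy i i' with h | h | h
    · rw [hm i' h] at hi'; exact absurd hi' (by simp)
    · rwa [h]
    · rw [hmax i h] at hi; exact absurd hi (by simp)
  · intro h; exact ⟨i, hi, h, hm⟩

def chain {n : ℕ} : List (Fin n) → DecTree (Fin n)
  | [] => .leaf false
  | i :: r => .node i (chain r) (.leaf (decide (Odd ((i : ℕ) + 1))))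

lemma chain_eval {n : ℕ} (x : Fin n → Bool) :
    ∀ L : List (Fin n), L.Pairwise (· > ·) → (∀ i, x i = true → i ∈ L) →
      (chain L).eval x = OMBb n x
  | [], _, hall => by
      have hz : ∀ i, x i = false := by
        intro i
        cases h : x i with
        | false => rfl
        | true => exact absurd (hall i h) List.not_mem_nil
      rw [OMBb_eq_false hz]
      rfl
  | a :: L, hs, hall => by
      rw [List.pairwise_cons] at hs
      simp only [chain, DecTree.eval]
      cases h : x a with
      | true =>
          have hmax : ∀ j, a < j → x j = false := by
            intro j hj
            cases hx : x j with
            | false => rfl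
            | true =>
                rcases List.mem_cons.mp (hall j hx) with rfl | hmem
                · exact absurd hj (lt_irrefl _)
                · exact absurd (hs.1 j hmem) (not_lt.mpr hj.le)
          rw [OMBb_max h hmax]
          simp
      | false =>
          simp only [Bool.false_eq_true, if_false]
          exact chain_eval x L hs.2 fun i hi => by
            rcases List.mem_cons.mp (hall i hi) with rfl | hmem
            · rw [h] at hi; exact absurd hi (by simp)
            · exact hmem

lemma chain_queries_le_length {n : ℕ} (x : Fin n → Bool) :
    ∀ L : List (Fin n), (chain L).queries x ≤ L.length
  | [] => le_refl _
  | a :: L => by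
      simp only [chain, DecTree.queries, List.length_cons]
      have := chain_queries_le_length x L
      cases h : x a <;> simp <;> omega

lemma chain_queries_le {n : ℕ} (x : Fin n → Bool) {i : Fin n} (hi : x i = true) :
    ∀ L : List (Fin n), L.Pairwise (· > ·) → i ∈ L →
      (chain L).queries x ≤ (L.filter (fun j => i ≤ j)).length
  | [], _, hmem => absurd hmem List.not_mem_nil
  | a :: L, hs, hmem => by
      rw [List.pairwise_cons] at hs
      have hia : i ≤ a := by
        rcases List.mem_cons.mp hmem with rfl | hmem'
        · exact le_refl _
        · exact (hs.1 i hmem').le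
      rw [List.filter_cons_of_pos (by simpa using hia)]
      simp only [chain, DecTree.queries, List.length_cons]
      cases h : x a with
      | true => simp
      | false =>
          simp only [Bool.false_eq_true, if_false]
          have hmem' : i ∈ L := by
            rcases List.mem_cons.mp hmem with rfl | hmem'
            · rw [h] at hi; exact absurd hi (by simp)
            · exact hmem'
          have := chain_queries_le x hi L hs.2 hmem'
          omega

/-- the full descending list -/
def descList (n : ℕ) : List (Fin n) := (List.finRange n).reverse

lemma descList_sorted (n : ℕ) : (descList n).Pairwise (· > ·) := by
  rw [descList, List.pairwise_reverse]
  exact List.pairwise_lt_finRange n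

lemma mem_descList {n : ℕ} (i : Fin n) : i ∈ descList n := by
  rw [descList, List.mem_reverse]; exact List.mem_finRange i

lemma descList_filter_length {n : ℕ} (i : Fin n) :
    ((descList n).filter (fun j => i ≤ j)).length ≤ n - (i : ℕ) := by
  have hnd : ((descList n).filter (fun j => i ≤ j)).Nodup :=
    ((List.nodup_reverse.mpr (List.nodup_finRange n))).filter _
  rw [← List.toFinset_card_of_nodup hnd]
  calc ((descList n).filter (fun j => i ≤ j)).toFinset.card
      ≤ (Finset.Ici i).card := by
        apply Finset.card_le_card
        intro j hj
        rw [List.mem_toFinset, List.mem_filter] at hj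
        rw [Finset.mem_Ici]
        exact of_decide_eq_true hj.2
    _ = n - (i : ℕ) := Fin.card_Ici i

lemma descList_length (n : ℕ) : (descList n).length = n := by
  simp [descList]

lemma cert_card_zero {n : ℕ} (hodd : Odd n) {x : Fin n → Bool} (hz : ∀ i, x i = false)
    {S : Finset (Fin n)} (hS : IsCert (OMBb n) x S) : (n + 1) / 2 ≤ S.card := by
  rw [Nat.odd_iff] at hodd
  have hmem : ∀ k, k < (n + 1) / 2 → ∃ i : Fin n, (i : ℕ) = 2 * k ∧ i ∈ S := by
    intro k hk
    have h2k : 2 * k < n := by omega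
    refine ⟨⟨2 * k, h2k⟩, rfl, ?_⟩
    by_contra hiS
    set i : Fin n := ⟨2 * k, h2k⟩ with hidef
    have hcert := hS (fun l => decide (l = i)) (by
      intro l hl
      have : l ≠ i := fun h => hiS (h ▸ hl)
      simp [this, hz l])
    rw [OMBb_eq_false hz] at hcert
    rw [OMBb_max (x := fun l => decide (l = i)) (i := i) (by simp)
      (fun j hj => by simp [Fin.ne_of_gt hj])] at hcert
    have : Odd ((i : ℕ) + 1) := by rw [Nat.odd_iff]; simp [hidef]
    simp [this] at hcert
  classical
  have hsub : (Finset.range ((n + 1) / 2)).image (fun k => 2 * k) ⊆ S.image Fin.val := by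
    intro j hj
    rw [Finset.mem_image] at hj
    obtain ⟨k, hk, rfl⟩ := hj
    rw [Finset.mem_range] at hk
    obtain ⟨i, hival, hiS⟩ := hmem k hk
    exact Finset.mem_image.mpr ⟨i, hiS, hival⟩
  have h1 := Finset.card_le_card hsub
  rw [Finset.card_image_of_injective _ (fun a b h => by omega),
    Finset.card_image_of_injective _ Fin.val_injective, Finset.card_range] at h1
  exact h1

lemma cert_card_pos {n : ℕ} {x : Fin n → Bool} {i : Fin n} (hi : x i = true)
    (hm : ∀ j, i < j → x j = false) {S : Finset (Fin n)} (hS : IsCert (OMBb n) x S) :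
    (n - (i : ℕ)) / 2 + 1 ≤ S.card := by
  classical
  set m : ℕ := (i : ℕ) with hmdef
  set K : ℕ := (n - m) / 2 with hKdef
  have him : m < n := i.isLt
  have fx : OMBb n x = decide (Odd (m + 1)) := OMBb_max hi hm
  -- (a) opposite-parity indices above m are in S
  have hmem : ∀ k, k < K → ∃ ji : Fin n, (ji : ℕ) = m + 1 + 2 * k ∧ ji ∈ S := by
    intro k hk
    have hj : m + 1 + 2 * k < n := by omega
    refine ⟨⟨m + 1 + 2 * k, hj⟩, rfl, ?_⟩
    by_contra hjS
    set ji : Fin n := ⟨m + 1 + 2 * k, hj⟩ with hjidef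
    set y : Fin n → Bool := fun l => if (l : ℕ) < (ji : ℕ) then x l else decide (l = ji)
      with hydef
    have hagree : ∀ l ∈ S, y l = x l := by
      intro l hl
      by_cases hcase : (l : ℕ) < (ji : ℕ)
      · simp only [hydef, hcase, if_true]
      · have hne : l ≠ ji := fun h => hjS (h ▸ hl)
        have hgt : (ji : ℕ) < (l : ℕ) := by
          rcases lt_or_eq_of_le (not_lt.mp hcase) with h | h
          · exact h
          · exact absurd (Fin.val_injective h.symm) hne
        have hgt' : m + 1 + 2 * k < (l : ℕ) := hgt
        have : x l = false := hm l (by rw [Fin.lt_def]; omega)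
        simp [hydef, hcase, hne, this]
    have hcert := hS y hagree
    have hymax : OMBb n y = decide (Odd ((ji : ℕ) + 1)) := by
      apply OMBb_max
      · simp [hydef]
      · intro l hl
        have h1 : ¬ ((l : ℕ) < (ji : ℕ)) := not_lt.mpr (le_of_lt hl)
        have h2 : l ≠ ji := Fin.ne_of_gt hl
        simp only [hydef, h1, h2, if_false, decide_false]
    rw [hymax, fx, decide_eq_decide] at hcert
    rw [Nat.odd_iff, Nat.odd_iff] at hcert
    have : (ji : ℕ) = m + 1 + 2 * k := rfl
    omega
  -- (b) some element of S is ≤ m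
  have hlow : ∃ s ∈ S, (s : ℕ) ≤ m := by
    by_contra hcon
    push_neg at hcon
    by_cases hOm : Odd (m + 1)
    · have hcert := hS (fun _ => false) (by
        intro s hs
        exact (hm s (by rw [Fin.lt_def]; exact hcon s hs)).symm)
      rw [OMBb_eq_false (fun _ => rfl), fx] at hcert
      simp [hOm] at hcert
    · have hm1 : 1 ≤ m := by
        rw [Nat.odd_iff] at hOm; omega
      set z : Fin n := ⟨0, by omega⟩ with hzdef
      have hcert := hS (fun l => decide (l = z)) (by
        intro s hs
        have hgt := hcon s hs
        have h1 : s ≠ z := by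
          intro h
          rw [h] at hgt
          simp [hzdef] at hgt
        have h2 : x s = false := hm s (by rw [Fin.lt_def]; omega)
        simp [h1, h2])
      rw [fx] at hcert
      rw [OMBb_max (x := fun l => decide (l = z)) (i := z) (by simp)
        (fun j hj => by simp [Fin.ne_of_gt hj])] at hcert
      rw [Nat.odd_iff] at hOm
      simp [hzdef, Nat.odd_iff, hOm] at hcert
  -- combine
  obtain ⟨s0, hs0S, hs0⟩ := hlow
  have hsub : insert (s0 : ℕ) ((Finset.range K).image (fun k => m + 1 + 2 * k))
      ⊆ S.image Fin.val := by
    intro j hj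
    rcases Finset.mem_insert.mp hj with rfl | hj
    · exact Finset.mem_image.mpr ⟨s0, hs0S, rfl⟩
    · rw [Finset.mem_image] at hj
      obtain ⟨k, hk, rfl⟩ := hj
      rw [Finset.mem_range] at hk
      obtain ⟨ji, hjival, hjiS⟩ := hmem k hk
      exact Finset.mem_image.mpr ⟨ji, hjiS, hjival⟩
  have h1 := Finset.card_le_card hsub
  rw [Finset.card_insert_of_notMem (by
      rw [Finset.mem_image]
      rintro ⟨k, -, hk⟩
      omega),
    Finset.card_image_of_injective _ (fun a b h => by omega),
    Finset.card_image_of_injective _ Fin.val_injective, Finset.card_range] at h1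
  omega


/-- For every odd positive `n`, the instance complexity of `OMB_n` is strictly
less than `2`. -/
theorem OMB_instC_lt_two (n : ℕ) (hn : 1 ≤ n) (hodd : Odd n) :
    ∃ T : DecTree (Fin n), Computes T (OMBb n) ∧
      ∀ x : Fin n → Bool, T.queries x < 2 * certC (OMBb n) x := by
  classical
  refine ⟨chain (descList n), fun x =>
    chain_eval x (descList n) (descList_sorted n) (fun i _ => mem_descList i), fun x => ?_⟩
  -- the certificate set is nonempty
  have hne : {k | ∃ S : Finset (Fin n), S.card = k ∧ IsCert (OMBb n) x S}.Nonempty := by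
    refine ⟨(Finset.univ : Finset (Fin n)).card, Finset.univ, rfl, fun y hy => ?_⟩
    have : y = x := funext fun i => hy i (Finset.mem_univ i)
    rw [this]
  obtain ⟨S, hScard, hScert⟩ :
      ∃ S : Finset (Fin n), S.card = certC (OMBb n) x ∧ IsCert (OMBb n) x S :=
    Nat.sInf_mem hne
  by_cases hex : ∃ i, x i = true
  · -- there is a maximum true index
    have hFne : (Finset.univ.filter fun i => x i = true).Nonempty := by
      obtain ⟨i, hi⟩ := hex
      exact ⟨i, Finset.mem_filter.mpr ⟨Finset.mem_univ i, hi⟩⟩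
    set i : Fin n := (Finset.univ.filter fun i => x i = true).max' hFne with hidef
    have hi : x i = true :=
      (Finset.mem_filter.mp ((Finset.univ.filter fun i => x i = true).max'_mem hFne)).2
    have hm : ∀ j, i < j → x j = false := by
      intro j hj
      cases hxj : x j with
      | false => rfl
      | true =>
          have := Finset.le_max' (Finset.univ.filter fun i => x i = true) j (Finset.mem_filter.mpr ⟨Finset.mem_univ j, hxj⟩)
          exact absurd hj (not_lt.mpr this)
    have hq : (chain (descList n)).queries x ≤ n - (i : ℕ) :=
      le_trans (chain_queries_le x hi (descList n) (descList_sorted n) (mem_descList i))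
        (descList_filter_length i)
    have hc : (n - (i : ℕ)) / 2 + 1 ≤ certC (OMBb n) x := hScard ▸ cert_card_pos hi hm hScert
    have him : (i : ℕ) < n := i.isLt
    omega
  · push_neg at hex
    have hz : ∀ i, x i = false := fun i => by
      cases h : x i with
      | false => rfl
      | true => exact absurd h (hex i)
    have hq : (chain (descList n)).queries x ≤ n := by
      have := chain_queries_le_length x (descList n)
      rwa [descList_length] at this
    have hc : (n + 1) / 2 ≤ certC (OMBb n) x := hScard ▸ cert_card_zero hodd hz hScert
    rw [Nat.odd_iff] at hodd
    omega
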